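/- For every even positive integer n, the sum over odd divisors d of n of μ(n/d)·(n/d)·φ(d) equals 2·μ(n). -/

import Mathlib

open Finset ArithmeticFunction

def phiAF : ArithmeticFunction ℕ := ⟨Nat.totient, Nat.totient_zero⟩

lemma phiAF_mult : phiAF.IsMultiplicative :=
  ⟨Nat.totient_one, fun cop => Nat.totient_mul cop⟩

lemma conv_eq_moebius :
    (ArithmeticFunction.pmul (ArithmeticFunction.moebius)
      ((ArithmeticFunction.id : ArithmeticFunction ℕ) : ArithmeticFunction ℤ)) *
      (phiAF : ArithmeticFunction ℤ)
    = ArithmeticFunction.moebius := by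
  rw [ArithmeticFunction.IsMultiplicative.eq_iff_eq_on_prime_powers _
    (((isMultiplicative_moebius).pmul (isMultiplicative_id.natCast)).mul
      (phiAF_mult.natCast)) _ isMultiplicative_moebius]
  intro p i hp
  rw [ArithmeticFunction.mul_apply]
  simp only [Nat.sum_divisorsAntidiagonal
    (fun a b => (ArithmeticFunction.moebius.pmul
      ((ArithmeticFunction.id : ArithmeticFunction ℕ) : ArithmeticFunction ℤ)) a *
      ((phiAF : ArithmeticFunction ℤ)) b)]
  rw [Nat.sum_divisors_prime_pow hp]
  have hphi : ∀ m : ℕ, ((phiAF : ArithmeticFunction ℤ)) m = (Nat.totient m : ℤ) := fun m => rfl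
  simp only [pmul_apply, natCoe_apply, id_apply, hphi]
  match i with
  | 0 => simp
  | 1 =>
    rw [Finset.sum_range_succ, Finset.sum_range_one]
    simp [Nat.totient_prime hp, moebius_apply_prime hp, pow_one,
      Nat.div_self hp.pos]
    push_cast [Nat.one_le_iff_ne_zero.mpr hp.pos.ne']
    ring
  | (k+2) =>
    rw [Finset.sum_range_succ', Finset.sum_range_succ']
    have hz : ∀ x ∈ range (k+1), (ArithmeticFunction.moebius (p ^ (x+1+1)) : ℤ) * ((p ^ (x+1+1) : ℕ) : ℤ) * (Nat.totient (p^(k+2) / p^(x+1+1)) : ℤ) = 0 := by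
      intro x _
      rw [moebius_apply_prime_pow hp (by omega), if_neg (by omega)]
      simp
    rw [Finset.sum_congr rfl hz, Finset.sum_const_zero, zero_add]
    have h0 : p ^ (k+2) / p ^ 0 = p ^ (k+2) := by simp
    have h1 : p ^ (k+2) / p ^ (0+1) = p ^ (k+1) := by
      rw [pow_one, pow_succ']
      exact Nat.mul_div_cancel_left _ hp.pos
    rw [h0, h1, moebius_apply_prime_pow (k := k+2) hp (by omega), if_neg (by omega)]
    simp only [zero_add, pow_one, moebius_apply_prime hp, ArithmeticFunction.moebius_apply_one,
      Nat.totient_prime_pow_succ hp]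
    have hmu1 : (ArithmeticFunction.moebius 1 : ℤ) = 1 := moebius_apply_one
    rw [pow_zero, hmu1]
    have hple : 1 ≤ p := hp.one_lt.le
    push_cast [hple]
    ring

lemma sum_moebius_mul_totient (m : ℕ) :
    ∑ d ∈ m.divisors,
      (ArithmeticFunction.moebius (m / d)) * ((m / d : ℕ) : ℤ) * (Nat.totient d : ℤ)
      = ArithmeticFunction.moebius m := by
  conv_rhs => rw [← conv_eq_moebius]
  rw [ArithmeticFunction.mul_apply]
  simp only [Nat.sum_divisorsAntidiagonal'
    (fun a b => (ArithmeticFunction.moebius.pmul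
      ((ArithmeticFunction.id : ArithmeticFunction ℕ) : ArithmeticFunction ℤ)) a *
      ((phiAF : ArithmeticFunction ℤ)) b)]
  apply Finset.sum_congr rfl
  intro x hx
  have hphi : ∀ k : ℕ, ((phiAF : ArithmeticFunction ℤ)) k = (Nat.totient k : ℤ) := fun k => rfl
  simp [pmul_apply, natCoe_apply, id_apply, hphi]

theorem moebius_totient_convolution_odd_divisors (n : ℕ) (hn : 0 < n) (hne : Even n) :
    ∑ d ∈ n.divisors.filter (fun d => Odd d),
        (ArithmeticFunction.moebius (n / d)) * ((n / d : ℕ) : ℤ) * (Nat.totient d : ℤ)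
      = 2 * ArithmeticFunction.moebius n := by
  set a := n.factorization 2 with ha
  set m := n / 2 ^ a with hmdef
  have h2 : (2 : ℕ).Prime := Nat.prime_two
  have hdvd : 2 ∣ n := hne.two_dvd
  have hnm : n = 2 ^ a * m := (Nat.ordProj_mul_ordCompl_eq_self n 2).symm
  have hm0 : 0 < m := Nat.ordCompl_pos 2 hn.ne'
  have hmodd : ¬ 2 ∣ m := Nat.not_dvd_ordCompl h2 hn.ne'
  have ha1 : 1 ≤ a := (Nat.Prime.factorization_pos_of_dvd h2 hn.ne' hdvd)
  have hodd_iff : ∀ k : ℕ, Odd k ↔ ¬ 2 ∣ k := fun k =>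
    Nat.odd_iff.trans (Nat.two_dvd_ne_zero).symm
  have hcop2 : ∀ k : ℕ, ¬ 2 ∣ k → Nat.Coprime 2 k := fun k h =>
    (Nat.Prime.coprime_iff_not_dvd h2).mpr h
  have hfilter : n.divisors.filter (fun d => Odd d) = m.divisors := by
    ext d
    simp only [Finset.mem_filter, Nat.mem_divisors]
    constructor
    · rintro ⟨⟨hdn, _⟩, hodd⟩
      refine ⟨?_, hm0.ne'⟩
      have hcop : Nat.Coprime d (2 ^ a) :=
        Nat.Coprime.pow_right _ ((hcop2 d ((hodd_iff d).mp hodd)).symm)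
      have hh : d ∣ m * 2 ^ a := by rw [mul_comm, ← hnm]; exact hdn
      exact Nat.Coprime.dvd_of_dvd_mul_right hcop hh
    · rintro ⟨hdm, _⟩
      refine ⟨⟨hdm.trans (by rw [hnm]; exact dvd_mul_left m (2 ^ a)), hn.ne'⟩, ?_⟩
      rw [hodd_iff]
      intro h2d
      exact hmodd (h2d.trans hdm)
  rw [hfilter]
  have hterm : ∀ d ∈ m.divisors,
      (ArithmeticFunction.moebius (n / d)) * ((n / d : ℕ) : ℤ) * (Nat.totient d : ℤ)
      = (ArithmeticFunction.moebius (2 ^ a) * (2 ^ a : ℤ)) *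
        ((ArithmeticFunction.moebius (m / d)) * ((m / d : ℕ) : ℤ) * (Nat.totient d : ℤ)) := by
    intro d hd
    rw [Nat.mem_divisors] at hd
    have hdm := hd.1
    have hnd : n / d = 2 ^ a * (m / d) := by
      rw [hnm, Nat.mul_div_assoc _ hdm]
    have hcop : Nat.Coprime (2 ^ a) (m / d) := by
      apply Nat.Coprime.pow_left
      exact hcop2 _ (fun h2d => hmodd (h2d.trans (Nat.div_dvd_of_dvd hdm)))
    rw [hnd, isMultiplicative_moebius.map_mul_of_coprime hcop]
    push_cast
    ring
  rw [Finset.sum_congr rfl hterm, ← Finset.mul_sum, sum_moebius_mul_totient]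
  rcases eq_or_lt_of_le ha1 with haeq | ha2
  · rw [← haeq, pow_one, moebius_apply_prime h2]
    have hmn : ArithmeticFunction.moebius n
        = ArithmeticFunction.moebius 2 * ArithmeticFunction.moebius m := by
      rw [hnm, ← haeq, pow_one]
      exact isMultiplicative_moebius.map_mul_of_coprime (hcop2 m hmodd)
    rw [hmn, moebius_apply_prime h2]
    push_cast
    ring
  · rw [moebius_apply_prime_pow h2 (by omega), if_neg (by omega)]
    have hsq : ¬ Squarefree n := by
      intro hsf
      have hdd : 2 * 2 ∣ n := by
        calc (2*2 : ℕ) = 2 ^ 2 := by norm_num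
        _ ∣ 2 ^ a := pow_dvd_pow 2 ha2
        _ ∣ n := Nat.ordProj_dvd n 2
      simpa using Nat.isUnit_iff.mp (hsf 2 hdd)
    rw [ArithmeticFunction.moebius_eq_zero_of_not_squarefree hsq]
    ring
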